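/- For every integer n ≥ 3, the number of distinct prime factors satisfies ω(n) ≤ (log n / log log n)·(1 + O(1/log log n)); in particular there is an absolute constant C such that ω(n) ≤ (log n / log log n)(1 + C/log log n) for all n ≥ 3. -/

import Mathlib

set_option maxHeartbeats 1000000

open Finset

noncomputable def myPi (N : ℕ) : ℕ := ((range (N+1)).filter Nat.Prime).card

lemma theta_le (N : ℕ) :
    ∑ p ∈ (range (N+1)).filter Nat.Prime, Real.log p ≤ N * Real.log 4 := by
  have h1 : ∑ p ∈ (range (N+1)).filter Nat.Prime, Real.log p
      = Real.log (primorial N) := by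
    rw [primorial, Nat.cast_prod, Real.log_prod]
    intro p hp
    exact_mod_cast (Nat.Prime.pos (mem_filter.1 hp).2).ne'
  rw [h1]
  calc Real.log (primorial N) ≤ Real.log ((4:ℕ) ^ N) := by
        apply Real.log_le_log (by exact_mod_cast primorial_pos N)
        exact_mod_cast primorial_le_4_pow N
    _ = N * Real.log 4 := by push_cast; rw [Real.log_pow]

lemma log_le_two_sqrt {N : ℕ} (hN : 1 ≤ N) : Real.log N ≤ 2 * Real.sqrt N := by
  have h0 : (0:ℝ) < N := by exact_mod_cast hN
  have hs : (0:ℝ) < Real.sqrt N := Real.sqrt_pos.2 h0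
  have := Real.log_le_sub_one_of_pos hs
  have hsq : Real.log (Real.sqrt N) = Real.log N / 2 := Real.log_sqrt h0.le
  nlinarith [Real.sqrt_nonneg (N:ℝ)]

lemma pi_bound (N : ℕ) (hN : 2 ≤ N) : (myPi N : ℝ) * Real.log N ≤ 5 * N := by
  classical
  set m := Nat.sqrt N with hm
  set S2 := (range (N+1)).filter Nat.Prime with hS2
  set Ssmall := S2.filter (fun p => p ≤ m) with hSs
  set Slarge := S2.filter (fun p => ¬ p ≤ m) with hSl
  have hcard : Ssmall.card + Slarge.card = S2.card :=
    Finset.card_filter_add_card_filter_not _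
  have hN0 : (0:ℝ) < N := by positivity
  have hlogN : (0:ℝ) ≤ Real.log N := Real.log_nonneg (by exact_mod_cast (by omega : 1 ≤ N))
  -- small part
  have hsub : Ssmall ⊆ Finset.Icc 2 m := by
    intro p hp
    rw [hSs, mem_filter] at hp
    rcases hp with ⟨hp1, hp2⟩
    rw [hS2, mem_filter] at hp1
    exact Finset.mem_Icc.2 ⟨hp1.2.two_le, hp2⟩
  have hsmall : (Ssmall.card : ℝ) ≤ Real.sqrt N := by
    have h1 : Ssmall.card ≤ m - 1 := by
      have := Finset.card_le_card hsub
      simpa [Nat.card_Icc] using this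
    have h2 : (m:ℝ) ≤ Real.sqrt N :=
      Real.le_sqrt_of_sq_le (by exact_mod_cast Nat.sqrt_le' N)
    calc (Ssmall.card : ℝ) ≤ ((m - 1 : ℕ) : ℝ) := by exact_mod_cast h1
      _ ≤ (m:ℝ) := by
          have := Nat.sub_le m 1; exact_mod_cast Nat.cast_le.2 this
      _ ≤ Real.sqrt N := h2
  -- large part
  have hlarge : (Slarge.card : ℝ) * (Real.log N / 2) ≤ N * Real.log 4 := by
    have hterm : ∀ p ∈ Slarge, Real.log N / 2 ≤ Real.log p := by
      intro p hp
      rw [hSl, mem_filter] at hp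
      rcases hp with ⟨hp1, hp2⟩
      rw [hS2, mem_filter] at hp1
      push_neg at hp2
      have hp2' : m + 1 ≤ p := hp2
      have hsq : (N:ℝ) < (p:ℝ)^2 := by
        have : N < (m+1)^2 := Nat.lt_succ_sqrt' N
        have h3 : (m+1)^2 ≤ p^2 := Nat.pow_le_pow_left hp2' 2
        exact_mod_cast lt_of_lt_of_le this h3
      have hp0 : (0:ℝ) < p := by exact_mod_cast hp1.2.pos
      have := Real.log_le_log hN0 hsq.le
      rw [Real.log_pow] at this
      push_cast at this
      linarith
    calc (Slarge.card : ℝ) * (Real.log N / 2)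
        ≤ ∑ p ∈ Slarge, Real.log p := by
          rw [mul_comm]
          exact Finset.card_nsmul_le_sum Slarge _ _ hterm |>.trans_eq' (by
            simp [nsmul_eq_mul, mul_comm])
      _ ≤ ∑ p ∈ S2, Real.log p := by
          apply Finset.sum_le_sum_of_subset_of_nonneg (Finset.filter_subset _ _)
          intro p hp _
          rw [hS2, mem_filter] at hp
          exact Real.log_nonneg (by exact_mod_cast hp.2.one_lt.le)
      _ ≤ N * Real.log 4 := theta_le N
  -- combine
  have hlog4 : Real.log 4 ≤ 2 * Real.log 2 := by
    rw [show (4:ℝ) = 2^2 by norm_num, Real.log_pow]; push_cast; ring_nf; exact le_rfl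
  have hlog2 : Real.log 2 < 0.6931471808 := Real.log_two_lt_d9
  have hmyPi : (myPi N : ℝ) = (Ssmall.card : ℝ) + (Slarge.card : ℝ) := by
    rw [myPi, ← hcard]; push_cast; ring
  have hlogle : Real.log N ≤ 2 * Real.sqrt N := log_le_two_sqrt ((by omega : 1 ≤ N))
  have hsqrtN : Real.sqrt N * Real.sqrt N = N := Real.mul_self_sqrt hN0.le
  have hsn : (0:ℝ) ≤ Real.sqrt N := Real.sqrt_nonneg _
  rw [hmyPi]
  have e1 : (Ssmall.card:ℝ) * Real.log N ≤ 2 * N := by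
    nlinarith [mul_le_mul_of_nonneg_right hsmall hlogN]
  have e3 : (N:ℝ) * Real.log 4 ≤ (N:ℝ) * (2*0.6931471808) :=
    mul_le_mul_of_nonneg_left (by nlinarith) hN0.le
  nlinarith [hlarge]

noncomputable def hfun (j : ℕ) : ℝ :=
  Real.log j + max 0 (Real.log (Real.log (j+1)) - Real.log 5)

lemma hfun_le_log {q j : ℕ} (hq : q.Prime) (hj : 1 ≤ j) (hjq : j ≤ myPi q) :
    hfun j ≤ Real.log q := by
  have hq2 : 2 ≤ q := hq.two_le
  have hlogq : (0:ℝ) < Real.log q :=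
    Real.log_pos (by exact_mod_cast hq.one_lt)
  -- q ≥ j + 1
  have hq_ge : j + 1 ≤ q := by
    have hsub : (range (q+1)).filter Nat.Prime ⊆ Finset.Icc 2 q := by
      intro p hp
      rw [mem_filter, Finset.mem_range] at hp
      exact Finset.mem_Icc.2 ⟨hp.2.two_le, by omega⟩
    have hcard : myPi q ≤ q - 1 := by
      have := Finset.card_le_card hsub
      simpa [myPi, Nat.card_Icc] using this
    omega
  have hjr : (1:ℝ) ≤ (j:ℝ) := by exact_mod_cast hj
  have hlogj : Real.log j ≤ Real.log q :=
    Real.log_le_log (by linarith) (by exact_mod_cast by omega)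
  rw [hfun]
  rcases le_or_gt (Real.log (Real.log (j+1)) - Real.log 5) 0 with hc | hc
  · rw [max_eq_left hc]; linarith
  · rw [max_eq_right hc.le]
    -- j * log q ≤ 5 * q
    have hpi : (myPi q : ℝ) * Real.log q ≤ 5 * q := pi_bound q hq2
    have hjpi : (j:ℝ) ≤ (myPi q : ℝ) := by exact_mod_cast hjq
    have hjlq : (j:ℝ) * Real.log q ≤ 5 * q := by
      nlinarith
    have hlog5q : Real.log ((j:ℝ) * Real.log q) ≤ Real.log (5 * q) :=
      Real.log_le_log (by positivity) hjlq
    rw [Real.log_mul (by positivity) hlogq.ne', Real.log_mul (by norm_num)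
      (by positivity : ((q:ℝ)) ≠ 0)] at hlog5q
    -- log log q ≥ log log (j+1)
    have hmono : Real.log (Real.log ((j:ℝ)+1)) ≤ Real.log (Real.log q) := by
      apply Real.log_le_log
      · apply Real.log_pos; exact_mod_cast by omega
      · apply Real.log_le_log (by positivity) (by exact_mod_cast hq_ge)
    push_cast at hmono ⊢
    linarith

lemma sum_hfun_le_aux (k : ℕ) : ∀ (S : Finset ℕ), S.card = k → (∀ p ∈ S, p.Prime) →
    ∑ j ∈ range S.card, hfun (j+1) ≤ ∑ p ∈ S, Real.log p := by
  classical
  induction k with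
  | zero =>
    intro S hk hS
    have : S = ∅ := Finset.card_eq_zero.1 hk
    simp [this]
  | succ k ih =>
    intro S hk hS
    have hne : S.Nonempty := by
      rw [← Finset.card_pos, hk]; omega
    set q := S.max' hne with hqdef
    have hqS : q ∈ S := S.max'_mem hne
    have hqprime : q.Prime := hS q hqS
    have hcard' : (S.erase q).card = k := by
      rw [Finset.card_erase_of_mem hqS, hk]; omega
    have hsum : ∑ p ∈ S, Real.log p
        = Real.log q + ∑ p ∈ S.erase q, Real.log p :=
      (Finset.add_sum_erase S _ hqS).symm
    have hstep : (k+1 : ℕ) ≤ myPi q := by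
      have hsub : S ⊆ (range (q+1)).filter Nat.Prime := by
        intro p hp
        rw [mem_filter, Finset.mem_range]
        exact ⟨by have := S.le_max' p hp; omega, hS p hp⟩
      have := Finset.card_le_card hsub
      rw [hk] at this
      exact this
    have hlast : hfun (k+1) ≤ Real.log q := hfun_le_log hqprime (by omega) hstep
    have ihS : ∑ j ∈ range k, hfun (j+1) ≤ ∑ p ∈ S.erase q, Real.log p := by
      have := ih (S.erase q) hcard' (fun p hp => hS p (Finset.mem_of_mem_erase hp))
      rwa [hcard'] at this
    rw [hk, Finset.sum_range_succ, hsum]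
    linarith

lemma sum_hfun_le (S : Finset ℕ) (hS : ∀ p ∈ S, p.Prime) :
    ∑ j ∈ range S.card, hfun (j+1) ≤ ∑ p ∈ S, Real.log p :=
  sum_hfun_le_aux S.card S rfl hS

lemma sum_log_ge (k : ℕ) :
    (k:ℝ) * Real.log k - k ≤ ∑ j ∈ range k, Real.log (j+1) := by
  induction k with
  | zero => simp
  | succ k ih =>
    rw [Finset.sum_range_succ]
    rcases Nat.eq_zero_or_pos k with hk0 | hk0
    · subst hk0; simp
    · have hkR : (0:ℝ) < k := by exact_mod_cast hk0
      have hkey : (k:ℝ) * (Real.log (k+1) - Real.log k) ≤ 1 := by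
        have h1 : Real.log (((k:ℝ)+1)/k) ≤ ((k:ℝ)+1)/k - 1 :=
          Real.log_le_sub_one_of_pos (by positivity)
        rw [Real.log_div (by positivity) hkR.ne'] at h1
        have h2 : ((k:ℝ)+1)/k - 1 = 1/k := by field_simp; ring
        rw [h2] at h1
        calc (k:ℝ) * (Real.log (k+1) - Real.log k) ≤ (k:ℝ) * (1/k) :=
              mul_le_mul_of_nonneg_left h1 hkR.le
          _ = 1 := by field_simp
      push_cast
      nlinarith [ih]

lemma sum_llog_ge (k : ℕ) (hk : Real.log 10 ≤ Real.log (Real.log k)) :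
    (k:ℝ) * Real.log (Real.log k) - (Real.log 10 + 2) * k
      ≤ ∑ j ∈ range k, max 0 (Real.log (Real.log (j+2)) - Real.log 5) := by
  have h10 : (0:ℝ) < Real.log 10 := Real.log_pos (by norm_num)
  have hlogk_pos : (1:ℝ) < Real.log k := by
    by_contra hcon
    push_neg at hcon
    have h0 : (0:ℝ) ≤ Real.log k := by
      rcases Nat.eq_zero_or_pos k with h | h
      · subst h; simp
      · exact Real.log_natCast_nonneg k
    have := Real.log_nonpos h0 hcon
    linarith
  have hk10 : (10:ℝ) ≤ Real.log k :=
    (Real.log_le_log_iff (by norm_num) (by linarith)).1 hk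
  set m := Nat.sqrt k with hmdef
  have hmk : m ≤ k := Nat.sqrt_le_self k
  have hmR : (m:ℝ) ≤ Real.sqrt k := Real.le_sqrt_of_sq_le (by exact_mod_cast Nat.sqrt_le' k)
  have hterm : ∀ j ∈ Finset.Ico m k,
      Real.log (Real.log k) - Real.log 10 ≤ max 0 (Real.log (Real.log (j+2)) - Real.log 5) := by
    intro j hj
    rw [Finset.mem_Ico] at hj
    have hj2 : (k:ℝ) < ((j:ℝ)+2)^2 := by
      have h1 : k < (m+1)^2 := Nat.lt_succ_sqrt' k
      have h2 : (m+1)^2 ≤ (j+2)^2 := Nat.pow_le_pow_left (by omega) 2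
      exact_mod_cast lt_of_lt_of_le h1 h2
    have hkpos : (0:ℝ) < k := by
      have : (1:ℝ) < Real.log k := hlogk_pos
      rcases Nat.eq_zero_or_pos k with h | h
      · subst h; simp at this; linarith
      · exact_mod_cast h
    have hlog2 : Real.log k / 2 ≤ Real.log ((j:ℝ)+2) := by
      have := Real.log_le_log hkpos hj2.le
      rw [Real.log_pow] at this
      push_cast at this ⊢
      linarith
    have hllog : Real.log (Real.log k / 2) ≤ Real.log (Real.log ((j:ℝ)+2)) :=
      Real.log_le_log (by linarith) hlog2
    rw [Real.log_div (by linarith) (by norm_num)] at hllog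
    have h10eq : Real.log 10 = Real.log 2 + Real.log 5 := by
      rw [show (10:ℝ) = 2*5 by norm_num, Real.log_mul] <;> norm_num
    have : Real.log (Real.log k) - Real.log 10
        ≤ Real.log (Real.log ((j:ℝ)+2)) - Real.log 5 := by
      rw [h10eq]; linarith
    push_cast
    exact le_max_of_le_right this
  have hsum1 : ((k - m : ℕ):ℝ) * (Real.log (Real.log k) - Real.log 10)
      ≤ ∑ j ∈ Finset.Ico m k, max 0 (Real.log (Real.log (j+2)) - Real.log 5) := by
    have := Finset.card_nsmul_le_sum (Finset.Ico m k) _ _ hterm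
    rwa [Nat.card_Ico, nsmul_eq_mul] at this
  have hsum2 : ∑ j ∈ Finset.Ico m k, max 0 (Real.log (Real.log (j+2)) - Real.log 5)
      ≤ ∑ j ∈ range k, max 0 (Real.log (Real.log (j+2)) - Real.log 5) := by
    apply Finset.sum_le_sum_of_subset_of_nonneg
    · intro x hx; rw [Finset.mem_Ico] at hx; exact Finset.mem_range.2 hx.2
    · intro i _ _; exact le_max_left _ _
  have hcast : ((k - m : ℕ):ℝ) = (k:ℝ) - m := by
    push_cast [Nat.cast_sub hmk]; ring
  have hllk_le : Real.log (Real.log k) ≤ Real.log k :=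
    (Real.log_le_sub_one_of_pos (by linarith)).trans (by linarith)
  have hlogk_sqrt : Real.log k ≤ 2 * Real.sqrt k := by
    have hk1 : 1 ≤ k := by
      by_contra h
      push_neg at h
      interval_cases k <;> simp_all <;> linarith
    exact log_le_two_sqrt hk1
  have hsq : Real.sqrt k * Real.sqrt k = k := Real.mul_self_sqrt (by positivity)
  have hsn : (0:ℝ) ≤ Real.sqrt k := Real.sqrt_nonneg _
  have hm0 : (0:ℝ) ≤ m := Nat.cast_nonneg m
  have hfin : (k:ℝ) * Real.log (Real.log k) - (Real.log 10 + 2) * k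
      ≤ ((k:ℝ) - m) * (Real.log (Real.log k) - Real.log 10) := by
    have h1 : (m:ℝ) * Real.log (Real.log k) ≤ 2 * k := by
      calc (m:ℝ) * Real.log (Real.log k) ≤ Real.sqrt k * Real.log k := by
            apply mul_le_mul hmR hllk_le (by linarith) hsn
        _ ≤ Real.sqrt k * (2 * Real.sqrt k) := by
            apply mul_le_mul_of_nonneg_left hlogk_sqrt hsn
        _ = 2 * (Real.sqrt k * Real.sqrt k) := by ring
        _ = 2 * k := by rw [hsq]
    have h2 : (0:ℝ) ≤ (m:ℝ) * Real.log 10 := by positivity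
    have h3 : (0:ℝ) ≤ (k:ℝ) := Nat.cast_nonneg k
    nlinarith
  rw [hcast] at hsum1
  linarith

theorem omega_upper_bound :
    ∃ C : ℝ, ∀ n : ℕ, 3 ≤ n →
      (n.primeFactors.card : ℝ)
        ≤ (Real.log n / Real.log (Real.log n)) * (1 + C / Real.log (Real.log n)) := by
  use 300
  intro n hn
  set k := n.primeFactors.card with hkdef
  set L := Real.log n with hLdef
  set l := Real.log L with hldef
  have hn3 : (3:ℝ) ≤ (n:ℝ) := by exact_mod_cast hn
  have hnpos : (0:ℝ) < n := by linarith
  have hL1 : 1 < L := by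
    rw [hLdef]
    calc (1:ℝ) = Real.log (Real.exp 1) := (Real.log_exp 1).symm
      _ < Real.log n := by
          apply Real.log_lt_log (Real.exp_pos 1)
          calc Real.exp 1 < 2.7182818286 := Real.exp_one_lt_d9
            _ ≤ n := by linarith
  have hLpos : (0:ℝ) < L := by linarith
  have hlpos : (0:ℝ) < l := Real.log_pos hL1
  have hlog2pos : (0:ℝ) < Real.log 2 := Real.log_pos (by norm_num)
  have hlog2lt : Real.log 2 < 0.6931471808 := Real.log_two_lt_d9
  have hprimes : ∀ p ∈ n.primeFactors, p.Prime := fun p hp => Nat.prime_of_mem_primeFactors hp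
  -- trivial bound k log 2 ≤ L
  have hklog2 : (k:ℝ) * Real.log 2 ≤ L := by
    have h2k : 2^k ≤ n := by
      calc 2^k = ∏ _p ∈ n.primeFactors, 2 := by rw [Finset.prod_const]
        _ ≤ ∏ p ∈ n.primeFactors, p :=
            Finset.prod_le_prod' fun p hp => (hprimes p hp).two_le
        _ ≤ n := Nat.le_of_dvd (by omega) (Nat.prod_primeFactors_dvd n)
    have hc : ((2^k : ℕ):ℝ) ≤ (n:ℝ) := by exact_mod_cast h2k
    have := Real.log_le_log (by positivity : (0:ℝ) < ((2^k : ℕ):ℝ)) hc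
    rw [Nat.cast_pow, Real.log_pow, Nat.cast_ofNat] at this
    linarith
  -- sum of logs of prime factors ≤ L
  have hsumL : ∑ p ∈ n.primeFactors, Real.log p ≤ L := by
    have hdvd := Nat.prod_primeFactors_dvd n
    have hle : (∏ p ∈ n.primeFactors, p : ℕ) ≤ n := Nat.le_of_dvd (by omega) hdvd
    have hpos : 0 < ∏ p ∈ n.primeFactors, p :=
      Finset.prod_pos fun p hp => (hprimes p hp).pos
    have h1 : Real.log (∏ p ∈ n.primeFactors, p : ℕ) ≤ L :=
      Real.log_le_log (by exact_mod_cast hpos) (by exact_mod_cast hle)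
    rw [Nat.cast_prod, Real.log_prod
      (fun p hp => by exact_mod_cast (hprimes p hp).pos.ne')] at h1
    exact h1
  -- reduce goal
  have hgoal : (k:ℝ) * l^2 ≤ L * (l + 300) → (k:ℝ) ≤ L / l * (1 + 300 / l) := by
    intro h
    have heq : L / l * (1 + 300 / l) = L * (l + 300) / l^2 := by
      field_simp
    rw [heq, le_div_iff₀ (by positivity)]
    exact h
  apply hgoal
  rcases le_or_gt l 13 with hl13 | hl13
  · -- small case
    have e : l^2 ≤ Real.log 2 * (l + 300) := by nlinarith [Real.log_two_gt_d9]
    have h1 : (k:ℝ) * l^2 ≤ (k:ℝ) * (Real.log 2 * (l + 300)) :=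
      mul_le_mul_of_nonneg_left e (Nat.cast_nonneg k)
    have h2 : (k:ℝ) * Real.log 2 * (l + 300) ≤ L * (l + 300) :=
      mul_le_mul_of_nonneg_right hklog2 (by linarith)
    nlinarith
  · rcases le_or_gt (k:ℝ) (L / l) with hkl | hkl
    · -- easy subcase
      have h1 : (k:ℝ) * l ≤ L := (le_div_iff₀ hlpos).1 hkl
      nlinarith [(Nat.cast_nonneg k : (0:ℝ) ≤ (k:ℝ))]
    · -- main case
      have hkpos : (0:ℝ) < k := lt_trans (by positivity) hkl
      have hlogk : l - Real.log l ≤ Real.log k := by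
        have := Real.log_le_log (by positivity : (0:ℝ) < L / l) hkl.le
        rwa [Real.log_div hLpos.ne' hlpos.ne'] at this
      have hlogl : Real.log l ≤ l / 13 + 1.7728 := by
        have h1 : Real.log (l / 13) ≤ l / 13 - 1 :=
          Real.log_le_sub_one_of_pos (by positivity)
        rw [Real.log_div hlpos.ne' (by norm_num)] at h1
        have h13 : Real.log 13 ≤ Real.log 16 := Real.log_le_log (by norm_num) (by norm_num)
        have h16 : Real.log 16 = 4 * Real.log 2 := by
          rw [show (16:ℝ) = 2^4 by norm_num, Real.log_pow]; push_cast; ring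
        nlinarith
      have hlogk10 : (10:ℝ) ≤ Real.log k := by nlinarith
      have hllk10 : Real.log 10 ≤ Real.log (Real.log k) :=
        Real.log_le_log (by norm_num) hlogk10
      have hllk : Real.log l - Real.log 2 ≤ Real.log (Real.log k) := by
        have hl2 : l / 2 ≤ Real.log k := by nlinarith
        have := Real.log_le_log (by positivity : (0:ℝ) < l/2) hl2
        rwa [Real.log_div hlpos.ne' (by norm_num)] at this
      -- sum bound
      have hsum := sum_hfun_le n.primeFactors hprimes
      have hsplit : ∑ j ∈ range k, hfun (j+1)
          = (∑ j ∈ range k, Real.log (j+1))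
            + ∑ j ∈ range k, max 0 (Real.log (Real.log (j+2)) - Real.log 5) := by
        rw [← Finset.sum_add_distrib]
        apply Finset.sum_congr rfl
        intro j _
        rw [hfun]
        push_cast
        ring_nf
      have h4a := sum_log_ge k
      have h4b := sum_llog_ge k hllk10
      have hLge : (k:ℝ) * (Real.log k + Real.log (Real.log k)) - (Real.log 10 + 3) * k ≤ L := by
        rw [← hkdef] at hsum
        rw [hsplit] at hsum
        have expand : (k:ℝ) * (Real.log k + Real.log (Real.log k)) - (Real.log 10 + 3) * k
            = ((k:ℝ) * Real.log k - k)
              + ((k:ℝ) * Real.log (Real.log k) - (Real.log 10 + 2) * k) := by ring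
        linarith
      -- numeric bounds
      have h10le : Real.log 10 ≤ 4 * Real.log 2 := by
        have h1 : Real.log 10 ≤ Real.log 16 := Real.log_le_log (by norm_num) (by norm_num)
        have h16 : Real.log 16 = 4 * Real.log 2 := by
          rw [show (16:ℝ) = 2^4 by norm_num, Real.log_pow]; push_cast; ring
        linarith
      have hC3 : (k:ℝ) * (l - 6.5) ≤ L := by
        have hsum2 : l - Real.log 2 ≤ Real.log k + Real.log (Real.log k) := by linarith
        have hmul : (k:ℝ) * (l - Real.log 2)
            ≤ (k:ℝ) * (Real.log k + Real.log (Real.log k)) :=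
          mul_le_mul_of_nonneg_left hsum2 hkpos.le
        have hx : Real.log 10 + Real.log 2 ≤ 3.5 := by linarith
        have hmul2 : (k:ℝ) * (Real.log 10 + Real.log 2) ≤ (k:ℝ) * 3.5 :=
          mul_le_mul_of_nonneg_left hx hkpos.le
        nlinarith
      have hstep1 : (k:ℝ) * (l - 6.5) * (l + 300) ≤ L * (l + 300) :=
        mul_le_mul_of_nonneg_right hC3 (by linarith)
      have hstep2 : (0:ℝ) ≤ (k:ℝ) * (293.5 * l - 1950) :=
        mul_nonneg hkpos.le (by linarith)
      nlinarith [hstep1, hstep2]
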